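/- Let p, q be integers and n ≥ 1 an integer. Set n_α = n / gcd(n, 2p − q) and let L = {(k₁, k₂) ∈ ℤ × ℤ : n ∣ 2p·k₁ + q·k₂ and n ∣ q·k₁ + 2p·k₂}. Then (n_α, −n_α) ∈ L, and there exists y₀ ∈ L such that every element of L can be written uniquely in the form a·(n_α, −n_α) + b·y₀ with a, b ∈ ℤ. -/

import Mathlib

/-- Lemma (`GL₂` section): with `n_α = n / gcd(n, 2p - q)` and
`L = {(k₁,k₂) : n ∣ 2p·k₁ + q·k₂ and n ∣ q·k₁ + 2p·k₂}`, the element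
`(n_α, -n_α)` lies in `L`, and there is `y₀ ∈ L` such that every element of `L`
is uniquely of the form `a·(n_α, -n_α) + b·y₀`. -/
theorem exists_basis_YQn_GL2 (p q : ℤ) (n : ℕ) (hn : 1 ≤ n) :
    ((n : ℤ) ∣ 2 * p * ((n : ℤ) / (Int.gcd (n : ℤ) (2 * p - q) : ℤ)) +
        q * (-((n : ℤ) / (Int.gcd (n : ℤ) (2 * p - q) : ℤ))) ∧
      (n : ℤ) ∣ q * ((n : ℤ) / (Int.gcd (n : ℤ) (2 * p - q) : ℤ)) +
        2 * p * (-((n : ℤ) / (Int.gcd (n : ℤ) (2 * p - q) : ℤ)))) ∧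
    ∃ y₀ : ℤ × ℤ,
      ((n : ℤ) ∣ 2 * p * y₀.1 + q * y₀.2 ∧ (n : ℤ) ∣ q * y₀.1 + 2 * p * y₀.2) ∧
      ∀ x : ℤ × ℤ, ((n : ℤ) ∣ 2 * p * x.1 + q * x.2 ∧
          (n : ℤ) ∣ q * x.1 + 2 * p * x.2) →
        ∃! ab : ℤ × ℤ,
          ab.1 • (((n : ℤ) / (Int.gcd (n : ℤ) (2 * p - q) : ℤ)),
              -((n : ℤ) / (Int.gcd (n : ℤ) (2 * p - q) : ℤ))) + ab.2 • y₀ = x := by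
  have hn0 : (n : ℤ) ≠ 0 := by exact_mod_cast Nat.one_le_iff_ne_zero.mp hn
  set d : ℤ := (Int.gcd (n : ℤ) (2 * p - q) : ℤ) with hd
  set A : ℤ := (n : ℤ) / d with hAdef
  have hgpos : 0 < Int.gcd (n : ℤ) (2 * p - q) :=
    Int.gcd_pos_of_ne_zero_left _ hn0
  have hd0 : d ≠ 0 := by positivity
  have hdn : d ∣ (n : ℤ) := Int.gcd_dvd_left _ _
  have hdq : d ∣ (2 * p - q) := Int.gcd_dvd_right _ _
  have hA : d * A = (n : ℤ) := Int.mul_ediv_cancel' hdn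
  have hA0 : A ≠ 0 := by
    intro h; rw [h, mul_zero] at hA; exact hn0 hA.symm
  obtain ⟨e, he⟩ := hdq
  -- key divisibility fact
  have key : ∀ m : ℤ, (n : ℤ) ∣ (2 * p - q) * m → A ∣ m := by
    intro m hm
    have hcop : IsCoprime A e := by
      rw [Int.isCoprime_iff_gcd_eq_one]
      have := Int.gcd_div_gcd_div_gcd (i := (n : ℤ)) (j := 2 * p - q) hgpos
      rw [← hd] at this
      have heq : (2 * p - q) / d = e := by
        rw [he]; exact Int.mul_ediv_cancel_left e hd0
      rwa [heq, ← hAdef] at this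
    have h1 : d * A ∣ d * (e * m) := by
      rw [hA]
      calc (n : ℤ) ∣ (2 * p - q) * m := hm
        _ = d * (e * m) := by rw [he]; ring
    have h2 : A ∣ e * m := (mul_dvd_mul_iff_left hd0).mp h1
    exact hcop.dvd_of_dvd_mul_left h2
  -- membership of (A, -A)
  have hv1 : (n : ℤ) ∣ 2 * p * A + q * (-A) := ⟨e, by linear_combination A * he + e * hA⟩
  have hv2 : (n : ℤ) ∣ q * A + 2 * p * (-A) := ⟨-e, by linear_combination (-A) * he - e * hA⟩
  refine ⟨⟨hv1, hv2⟩, ?_⟩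
  -- the subgroup of ℤ of sums of coordinates of elements of L
  set H : AddSubgroup ℤ :=
    { carrier := {s | ∃ x : ℤ × ℤ, ((n : ℤ) ∣ 2 * p * x.1 + q * x.2 ∧
          (n : ℤ) ∣ q * x.1 + 2 * p * x.2) ∧ x.1 + x.2 = s}
      zero_mem' := ⟨(0, 0), ⟨by simp, by simp⟩, by simp⟩
      add_mem' := by
        rintro a b ⟨x, ⟨h1, h2⟩, hs⟩ ⟨y, ⟨h3, h4⟩, ht⟩
        refine ⟨x + y, ⟨?_, ?_⟩, ?_⟩
        · have := dvd_add h1 h3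
          convert this using 1; case e'_2 => rfl
          simp [Prod.fst_add, Prod.snd_add]; ring
        · have := dvd_add h2 h4
          convert this using 1; case e'_2 => rfl
          simp [Prod.fst_add, Prod.snd_add]; ring
        · simp [Prod.fst_add, Prod.snd_add, ← hs, ← ht]; ring
      neg_mem' := by
        rintro a ⟨x, ⟨h1, h2⟩, hs⟩
        refine ⟨-x, ⟨?_, ?_⟩, ?_⟩
        · have := h1.neg_right
          convert this using 1; case e'_2 => rfl
          simp; ring
        · have := h2.neg_right
          convert this using 1; case e'_2 => rfl
          simp; ring
        · simp [← hs]; ring } with hH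
  obtain ⟨g, hg⟩ := Int.subgroup_cyclic H
  have memH : ∀ s : ℤ, s ∈ H ↔ ∃ k : ℤ, k * g = s := by
    intro s
    rw [hg, AddSubgroup.mem_closure_singleton]
    simp [smul_eq_mul]
  have hnH : (n : ℤ) ∈ H := ⟨((n : ℤ), 0), ⟨⟨⟨2 * p, by ring⟩, ⟨q, by ring⟩⟩, by ring⟩⟩
  have hg0 : g ≠ 0 := by
    intro h
    obtain ⟨k, hk⟩ := (memH _).mp hnH
    rw [h, mul_zero] at hk
    exact hn0 hk.symm
  have hgH : g ∈ H := (memH g).mpr ⟨1, one_mul g⟩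
  obtain ⟨y₀, ⟨hy1, hy2⟩, hysum⟩ := hgH
  refine ⟨y₀, ⟨hy1, hy2⟩, ?_⟩
  rintro x ⟨hx1, hx2⟩
  -- find b
  have hxH : x.1 + x.2 ∈ H := ⟨x, ⟨hx1, hx2⟩, rfl⟩
  obtain ⟨b, hb⟩ := (memH _).mp hxH
  -- the difference lies on the antidiagonal
  have hsum : x.2 - b * y₀.2 = -(x.1 - b * y₀.1) := by linear_combination -hb - b * hysum
  have hdvd : (n : ℤ) ∣ (2 * p - q) * (x.1 - b * y₀.1) := by
    have h1 := dvd_sub hx1 ((Dvd.dvd.mul_left hy1 b))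
    convert h1 using 1; case e'_2 => rfl
    linear_combination (-q) * hsum
  obtain ⟨a, ha⟩ := key _ hdvd
  have heq1 : x.1 = a * A + b * y₀.1 := by linarith [ha]
  have heq2 : x.2 = -(a * A) + b * y₀.2 := by
    have := hsum
    rw [ha] at this
    linarith
  refine ⟨(a, b), ?_, ?_⟩
  · ext
    · simp only [Prod.fst_add, Prod.smul_fst, smul_eq_mul]
      linarith [heq1]
    · simp only [Prod.snd_add, Prod.smul_snd, smul_eq_mul]
      linarith [heq2]
  · rintro ⟨a', b'⟩ hab'
    have h1 : a' * A + b' * y₀.1 = x.1 := by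
      have := congrArg Prod.fst hab'
      simpa [smul_eq_mul] using this
    have h2 : a' * (-A) + b' * y₀.2 = x.2 := by
      have := congrArg Prod.snd hab'
      simpa [smul_eq_mul] using this
    have hb' : b' = b := by
      have hsum' : b' * g = b * g := by
        rw [hb, ← hysum]
        linarith
      exact mul_right_cancel₀ hg0 hsum'
    have ha' : a' = a := by
      have : a' * A = a * A := by
        rw [hb'] at h1
        linarith [heq1]
      exact mul_right_cancel₀ hA0 this
    simp [ha', hb']
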